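/- Let p > 3 be prime. For the family S_λ = Σ_{x ∈ F_p} σ(x³ + λ x) (λ ∈ F_p), the variance (1/p)Σ_λ S_λ² − ((1/p)Σ_λ S_λ)² equals (1 + σ(−1))·(p − 1). -/

import Mathlib

open Finset

section aux

variable (p : ℕ) [Fact p.Prime]

private lemma stmt5_char2 (hp : 3 < p) : ringChar (ZMod p) ≠ 2 := by
  rw [ZMod.ringChar_zmod_n]; omega

private lemma stmt5_sum0 (hp : 3 < p) : ∑ a : ZMod p, quadraticChar (ZMod p) a = 0 :=
  quadraticChar_sum_zero (stmt5_char2 p hp)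

/-- For `a ≠ 0`, `∑ u, χ(u(u+a)) = -1`. -/
private lemma stmt5_A (hp : 3 < p) {a : ZMod p} (ha : a ≠ 0) :
    ∑ u : ZMod p, quadraticChar (ZMod p) (u * (u + a)) = -1 := by
  rw [← Finset.sum_erase (Finset.univ) (f := fun u => (quadraticChar (ZMod p)) (u * (u + a))) (a := 0) (by simp)]
  have key : ∀ u ∈ Finset.univ.erase (0 : ZMod p),
      (quadraticChar (ZMod p)) (u * (u + a)) = (quadraticChar (ZMod p)) (1 + a * u⁻¹) := by
    intro u hu
    have hu0 : u ≠ 0 := Finset.ne_of_mem_erase hu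
    have : u * (u + a) = u ^ 2 * (1 + a * u⁻¹) := by
      field_simp
    rw [this, map_mul, quadraticChar_sq_one' hu0, one_mul]
  rw [Finset.sum_congr rfl key]
  have hbij : ∑ u ∈ Finset.univ.erase (0 : ZMod p), (quadraticChar (ZMod p)) (1 + a * u⁻¹)
      = ∑ t ∈ Finset.univ.erase (1 : ZMod p), (quadraticChar (ZMod p)) t := by
    apply Finset.sum_nbij' (fun u => 1 + a * u⁻¹) (fun t => a * (t - 1)⁻¹)
    · intro u hu
      have hu0 : u ≠ 0 := Finset.ne_of_mem_erase hu
      simp only [Finset.mem_erase, Finset.mem_univ, and_true]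
      intro h
      apply ha
      have : a * u⁻¹ = 0 := by linear_combination h
      rcases mul_eq_zero.1 this with h' | h'
      · exact h'
      · exact absurd (inv_eq_zero.1 h') hu0
    · intro t ht
      have ht1 : t ≠ 1 := Finset.ne_of_mem_erase ht
      simp only [Finset.mem_erase, Finset.mem_univ, and_true]
      intro h
      rcases mul_eq_zero.1 h with h' | h'
      · exact ha h'
      · exact ht1 (by have := inv_eq_zero.1 h'; linear_combination this)
    · intro u hu
      have hu0 : u ≠ 0 := Finset.ne_of_mem_erase hu
      have h1 : (1 + a * u⁻¹) - 1 = a * u⁻¹ := by ring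
      rw [h1]
      field_simp
    · intro t ht
      have ht1 : t ≠ 1 := Finset.ne_of_mem_erase ht
      have hne : t - 1 ≠ 0 := sub_ne_zero.mpr ht1
      rw [mul_inv, inv_inv]
      field_simp
      ring
    · intro u hu; rfl
  rw [hbij]
  have : ∑ t ∈ Finset.univ.erase (1 : ZMod p), (quadraticChar (ZMod p)) t
      = (∑ t : ZMod p, (quadraticChar (ZMod p)) t) - (quadraticChar (ZMod p)) 1 := by
    rw [← Finset.add_sum_erase Finset.univ (quadraticChar (ZMod p)) (Finset.mem_univ 1)]; ring
  rw [this, stmt5_sum0 p hp]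
  simp

/-- `∑ l, χ((l+a)(l+b)) = p - 1` if `a = b`, else `-1`. -/
private lemma stmt5_B (hp : 3 < p) (a b : ZMod p) :
    ∑ l : ZMod p, quadraticChar (ZMod p) ((l + a) * (l + b))
      = if a = b then (p : ℤ) - 1 else -1 := by
  by_cases hab : a = b
  · subst hab
    rw [if_pos rfl]
    rw [← Finset.sum_erase (Finset.univ) (f := fun l => (quadraticChar (ZMod p)) ((l + a) * (l + a))) (a := -a) (by simp)]
    have key : ∀ l ∈ Finset.univ.erase (-a : ZMod p),
        (quadraticChar (ZMod p)) ((l + a) * (l + a)) = 1 := by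
      intro l hl
      have hl0 : l + a ≠ 0 := by
        intro h
        exact Finset.ne_of_mem_erase hl (by linear_combination h)
      rw [← sq]
      exact quadraticChar_sq_one' hl0
    rw [Finset.sum_congr rfl key, Finset.sum_const, Finset.card_erase_of_mem (Finset.mem_univ _),
      Finset.card_univ, ZMod.card]
    simp
    omega
  · simp only [if_neg hab]
    have hba : b - a ≠ 0 := sub_ne_zero.mpr (Ne.symm hab)
    have := stmt5_A p hp hba
    rw [← this]
    apply Fintype.sum_equiv (Equiv.addRight a)
    intro u
    congr 1
    simp only [Equiv.coe_addRight]
    ring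

private lemma stmt5_M1 (hp : 3 < p) :
    ∑ l : ZMod p, ∑ x : ZMod p, quadraticChar (ZMod p) (x ^ 3 + l * x) = 0 := by
  rw [Finset.sum_comm]
  apply Finset.sum_eq_zero
  intro x _
  by_cases hx : x = 0
  · subst hx; simp
  · have : ∑ l : ZMod p, (quadraticChar (ZMod p)) (x ^ 3 + l * x) = ∑ t : ZMod p, (quadraticChar (ZMod p)) t := by
      apply Fintype.sum_equiv ((Equiv.mulRight₀ x hx).trans (Equiv.addLeft (x ^ 3)))
      intro l; rfl
    rw [this, stmt5_sum0 p hp]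

private lemma stmt5_M2 (hp : 3 < p) :
    ∑ l : ZMod p, (∑ x : ZMod p, quadraticChar (ZMod p) (x ^ 3 + l * x)) ^ 2
      = (1 + quadraticChar (ZMod p) (-1)) * ((p : ℤ) - 1) * p := by
  have hodd : (2 : ZMod p) ≠ 0 := by
    intro h
    have h2 : ((2 : ℕ) : ZMod p) = 0 := by exact_mod_cast h
    have hd := (ZMod.natCast_eq_zero_iff 2 p).mp h2
    have := Nat.le_of_dvd (by norm_num) hd
    omega
  calc ∑ l : ZMod p, (∑ x : ZMod p, (quadraticChar (ZMod p)) (x ^ 3 + l * x)) ^ 2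
      = ∑ x : ZMod p, ∑ y : ZMod p, ∑ l : ZMod p, (quadraticChar (ZMod p)) (x ^ 3 + l * x) * (quadraticChar (ZMod p)) (y ^ 3 + l * y) := by
        simp_rw [sq, Finset.sum_mul_sum]
        rw [Finset.sum_comm]
        congr 1; ext x
        rw [Finset.sum_comm]
    _ = ∑ x : ZMod p, (if x = 0 then 0 else ((p : ℤ)) * (1 + (quadraticChar (ZMod p)) (-1))) := by
        apply Finset.sum_congr rfl
        intro x _
        by_cases hx : x = 0
        · subst hx; simp
        · rw [if_neg hx]
          have inner : ∀ y : ZMod p, ∑ l : ZMod p, (quadraticChar (ZMod p)) (x ^ 3 + l * x) * (quadraticChar (ZMod p)) (y ^ 3 + l * y)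
              = if y = 0 then 0 else (quadraticChar (ZMod p)) (x * y) * (if x ^ 2 = y ^ 2 then (p : ℤ) - 1 else -1) := by
            intro y
            by_cases hy : y = 0
            · subst hy; simp
            · rw [if_neg hy, ← stmt5_B p hp (x ^ 2) (y ^ 2), Finset.mul_sum]
              apply Finset.sum_congr rfl
              intro l _
              have e1 : x ^ 3 + l * x = x * (l + x ^ 2) := by ring
              have e2 : y ^ 3 + l * y = y * (l + y ^ 2) := by ring
              rw [e1, e2, map_mul, map_mul, map_mul, map_mul]
              ring
          simp_rw [inner]
          rw [← Finset.sum_erase (Finset.univ) (f := fun y => if y = 0 then (0:ℤ) else (quadraticChar (ZMod p)) (x * y) * (if x ^ 2 = y ^ 2 then (p : ℤ) - 1 else -1)) (a := 0) (by simp)]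
          have key : ∀ y ∈ Finset.univ.erase (0 : ZMod p),
              (if y = 0 then (0:ℤ) else (quadraticChar (ZMod p)) (x * y) * (if x ^ 2 = y ^ 2 then (p : ℤ) - 1 else -1))
              = (quadraticChar (ZMod p)) (x * y) * (-1) + (if y = x then (quadraticChar (ZMod p)) (x * y) * p else 0)
                + (if y = -x then (quadraticChar (ZMod p)) (x * y) * p else 0) := by
            intro y hy
            have hy0 : y ≠ 0 := Finset.ne_of_mem_erase hy
            rw [if_neg hy0]
            have hxx : x ≠ -x := by
              intro h
              apply hx
              have h2 : (2 : ZMod p) * x = 0 := by linear_combination h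
              rcases mul_eq_zero.1 h2 with h' | h'
              · exact absurd h' hodd
              · exact h'
            by_cases h1 : y = x
            · subst h1
              rw [if_pos rfl, if_pos rfl, if_neg hxx]
              ring
            · by_cases h2 : y = -x
              · subst h2
                rw [if_pos (by ring), if_neg h1, if_pos rfl]
                ring
              · have hsq : x ^ 2 ≠ y ^ 2 := by
                  intro h
                  rcases sq_eq_sq_iff_eq_or_eq_neg.mp h.symm with h' | h'
                  · exact h1 h'
                  · exact h2 h'
                rw [if_neg hsq, if_neg h1, if_neg h2]
                ring
          rw [Finset.sum_congr rfl key]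
          rw [Finset.sum_add_distrib, Finset.sum_add_distrib]
          have s1 : ∑ y ∈ Finset.univ.erase (0 : ZMod p), (quadraticChar (ZMod p)) (x * y) * (-1) = 0 := by
            have : ∑ y ∈ Finset.univ.erase (0 : ZMod p), (quadraticChar (ZMod p)) (x * y)
                = (quadraticChar (ZMod p)) x * ∑ y ∈ Finset.univ.erase (0 : ZMod p), (quadraticChar (ZMod p)) y := by
              rw [Finset.mul_sum]
              exact Finset.sum_congr rfl fun y _ => map_mul (quadraticChar (ZMod p)) x y
            have h2 : ∑ y ∈ Finset.univ.erase (0 : ZMod p), (quadraticChar (ZMod p)) y = 0 := by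
              rw [Finset.sum_erase Finset.univ (f := quadraticChar (ZMod p)) (a := 0) (by simp), stmt5_sum0 p hp]
            rw [← Finset.sum_mul, this, h2]
            ring
          have s2 : ∑ y ∈ Finset.univ.erase (0 : ZMod p),
              (if y = x then (quadraticChar (ZMod p)) (x * y) * (p:ℤ) else 0) = (p : ℤ) := by
            rw [Finset.sum_ite_eq' (Finset.univ.erase (0 : ZMod p)) x (fun y => (quadraticChar (ZMod p)) (x * y) * (p:ℤ))]
            rw [if_pos (Finset.mem_erase.mpr ⟨hx, Finset.mem_univ x⟩)]
            rw [← sq, quadraticChar_sq_one' hx, one_mul]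
          have s3 : ∑ y ∈ Finset.univ.erase (0 : ZMod p),
              (if y = -x then (quadraticChar (ZMod p)) (x * y) * (p:ℤ) else 0) = (quadraticChar (ZMod p)) (-1) * (p : ℤ) := by
            rw [Finset.sum_ite_eq' (Finset.univ.erase (0 : ZMod p)) (-x) (fun y => (quadraticChar (ZMod p)) (x * y) * (p:ℤ))]
            rw [if_pos (Finset.mem_erase.mpr ⟨neg_ne_zero.mpr hx, Finset.mem_univ _⟩)]
            have : x * (-x) = (-1) * x ^ 2 := by ring
            rw [this, map_mul, quadraticChar_sq_one' hx, mul_one]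
          rw [s1, s2, s3]
          ring
    _ = (1 + (quadraticChar (ZMod p)) (-1)) * ((p : ℤ) - 1) * p := by
        rw [← Finset.sum_erase (Finset.univ) (f := fun x : ZMod p => if x = 0 then (0:ℤ) else ((p : ℤ)) * (1 + (quadraticChar (ZMod p)) (-1))) (a := 0) (by simp)]
        have key : ∀ x ∈ Finset.univ.erase (0 : ZMod p),
            (if x = 0 then (0:ℤ) else ((p : ℤ)) * (1 + (quadraticChar (ZMod p)) (-1))) = ((p : ℤ)) * (1 + (quadraticChar (ZMod p)) (-1)) := by
          intro x hx
          exact if_neg (Finset.ne_of_mem_erase hx)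
        rw [Finset.sum_congr rfl key, Finset.sum_const, Finset.card_erase_of_mem (Finset.mem_univ _),
          Finset.card_univ, ZMod.card, nsmul_eq_mul]
        have hp1 : 1 ≤ p := by omega
        push_cast [hp1]
        ring

end aux

theorem stmt5 (p : ℕ) [Fact p.Prime] (hp : 3 < p) :
    ((((∑ l : ZMod p, (∑ x : ZMod p, quadraticChar (ZMod p) (x ^ 3 + l * x)) ^ 2) : ℤ) : ℚ) / p) -
      ((((∑ l : ZMod p, ∑ x : ZMod p, quadraticChar (ZMod p) (x ^ 3 + l * x)) : ℤ) : ℚ) / p) ^ 2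
      = (1 + quadraticChar (ZMod p) (-1)) * (p - 1) := by
  rw [stmt5_M1 p hp, stmt5_M2 p hp]
  have hp0 : (p : ℚ) ≠ 0 := Nat.cast_ne_zero.mpr (by omega)
  push_cast
  field_simp
  ring
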